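/- Let n be a positive integer and let V be a complex inner product space with an orthogonal direct-sum decomposition V = V₀ ⊕ V₁ ⊕ ⋯ ⊕ Vₙ. Let d : V → V be a linear map with d(V_k) ⊆ V_{k+1} for k < n, d(Vₙ) = 0, and d∘d = 0, and let d* : V → V be a linear map satisfying ⟨d v, w⟩ = ⟨v, d* w⟩ for all v, w ∈ V, with d*(V_k) ⊆ V_{k−1} for k ≥ 1 and d*(V₀) = 0. Set D = d + d* and Δ = D∘D. Let θ > 0 and suppose that every eigenvalue of Δ that admits an eigenvector lying in a single summand V_k with k ≤ n − 1 is ≥ θ. Then: (i) every nonzero eigenvalue of Δ is a real number ≥ θ; and (ii) every eigenvalue μ of D is real and satisfies μ = 0 or μ² ≥ θ (so |μ| ≥ √θ whenever μ ≠ 0). -/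

import Mathlib

/-- Let `V = V₀ ⊕ ⋯ ⊕ Vₙ` be an orthogonal decomposition of a complex
inner product space, `d` a degree `+1` map with `d∘d = 0` and `d(Vₙ) = 0`, and `d*` an
adjoint of `d` of degree `−1` with `d*(V₀) = 0`.  Set `D = d + d*` and `Δ = D∘D`.  If
`θ > 0` and every eigenvalue of `Δ` admitting an eigenvector lying in a single summand
`V_k` with `k ≤ n − 1` is `≥ θ`, then every nonzero eigenvalue of `Δ` is a real number
`≥ θ`, and every eigenvalue `μ` of `D` is real with `μ = 0` or `μ² ≥ θ`. -/
theorem spectral_gap_dolbeault_dirac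
    (n : ℕ) (hn : 0 < n) (θ : ℝ) (hθ : 0 < θ)
    (V : Type*) [NormedAddCommGroup V] [InnerProductSpace ℂ V]
    (Vsub : ℕ → Submodule ℂ V)
    (hdec : DirectSum.IsInternal fun k : Fin (n + 1) => Vsub k)
    (horth : ∀ k l : ℕ, k ≠ l → ∀ v ∈ Vsub k, ∀ w ∈ Vsub l, (inner ℂ v w : ℂ) = 0)
    (d dstar : Module.End ℂ V)
    (hdeg : ∀ k : ℕ, k < n → ∀ v ∈ Vsub k, d v ∈ Vsub (k + 1))
    (hdn : ∀ v ∈ Vsub n, d v = 0)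
    (hd2 : d * d = 0)
    (hadj : ∀ v w : V, (inner ℂ (d v) w : ℂ) = (inner ℂ v (dstar w) : ℂ))
    (hstardeg : ∀ k : ℕ, 1 ≤ k → ∀ v ∈ Vsub k, dstar v ∈ Vsub (k - 1))
    (hstar0 : ∀ v ∈ Vsub 0, dstar v = 0)
    (hgap : ∀ (lam : ℂ) (k : ℕ), k ≤ n - 1 →
      (∃ v ∈ Vsub k, v ≠ 0 ∧ ((d + dstar) * (d + dstar)) v = lam • v) →
      ∃ r : ℝ, lam = (r : ℂ) ∧ θ ≤ r) :
    (∀ lam : ℂ, lam ≠ 0 →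
      (∃ v : V, v ≠ 0 ∧ ((d + dstar) * (d + dstar)) v = lam • v) →
      ∃ r : ℝ, lam = (r : ℂ) ∧ θ ≤ r) ∧
    (∀ mu : ℂ, (∃ v : V, v ≠ 0 ∧ (d + dstar) v = mu • v) →
      ∃ r : ℝ, mu = (r : ℂ) ∧ (r = 0 ∨ θ ≤ r ^ 2)) := by
  classical
  -- `d ∘ d = 0` pointwise
  have hd2app : ∀ u : V, d (d u) = 0 := by
    intro u
    have := DFunLike.congr_fun hd2 u
    simpa [Module.End.mul_apply] using this
  -- `d* ∘ d* = 0` pointwise, by nondegeneracy of the inner product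
  have hds2 : ∀ u : V, dstar (dstar u) = 0 := by
    intro u
    have h1 : (inner ℂ (dstar (dstar u)) (dstar (dstar u)) : ℂ) = 0 := by
      rw [← hadj, ← hadj, hd2app]
      simp
    exact inner_self_eq_zero.mp h1
  -- the Laplacian pointwise
  have hDelta : ∀ u : V, ((d + dstar) * (d + dstar)) u = d (dstar u) + dstar (d u) := by
    intro u
    have h : ((d + dstar) * (d + dstar)) u
        = d (d u) + d (dstar u) + (dstar (d u) + dstar (dstar u)) := by
      simp only [Module.End.mul_apply, LinearMap.add_apply, map_add]
      abel
    rw [h, hd2app u, hds2 u]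
    abel
  -- a sum of mutually orthogonal components is zero iff all components are zero
  have hzero : ∀ y : Fin (n + 1) → V, (∀ k : Fin (n + 1), y k ∈ Vsub (k : ℕ)) → ∑ k, y k = 0 →
      ∀ k, y k = 0 := by
    intro y hy hsum j
    have h1 : (inner ℂ (y j) (∑ k, y k) : ℂ) = inner ℂ (y j) (y j) := by
      rw [inner_sum]
      refine Finset.sum_eq_single j ?_ ?_
      · intro k _ hk
        exact horth j k (fun h => hk (Fin.val_injective h.symm)) (y j) (hy j) (y k) (hy k)
      · intro h; exact absurd (Finset.mem_univ j) h
    rw [hsum, inner_zero_right] at h1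
    exact inner_self_eq_zero.mp h1.symm
  -- the Laplacian preserves each summand
  have hpres : ∀ k : Fin (n + 1), ∀ u ∈ Vsub (k : ℕ),
      ((d + dstar) * (d + dstar)) u ∈ Vsub (k : ℕ) := by
    intro k u hu
    rw [hDelta]
    refine Submodule.add_mem _ ?_ ?_
    · rcases Nat.eq_zero_or_pos (k : ℕ) with h0 | h1
      · rw [h0] at hu ⊢
        rw [hstar0 u hu, map_zero]
        exact Submodule.zero_mem _
      · have h2 := hstardeg (k : ℕ) h1 u hu
        have hk := k.isLt
        have h3 : (k : ℕ) - 1 < n := by omega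
        have h4 := hdeg _ h3 _ h2
        have e : (k : ℕ) - 1 + 1 = (k : ℕ) := by omega
        rwa [e] at h4
    · rcases eq_or_lt_of_le (Nat.lt_succ_iff.mp k.isLt) with hn' | hlt
      · have hu' : u ∈ Vsub n := hn' ▸ hu
        rw [hdn u hu', map_zero]
        exact Submodule.zero_mem _
      · have h2 := hdeg (k : ℕ) hlt u hu
        have h4 := hstardeg ((k : ℕ) + 1) (by omega) _ h2
        simpa using h4
  -- Part (i)
  have hmain : ∀ lam : ℂ, lam ≠ 0 →
      (∃ v : V, v ≠ 0 ∧ ((d + dstar) * (d + dstar)) v = lam • v) →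
      ∃ r : ℝ, lam = (r : ℂ) ∧ θ ≤ r := by
    rintro lam hlam ⟨v, hv0, hveq⟩
    obtain ⟨f, hf⟩ := hdec.surjective v
    set y : Fin (n + 1) → V := fun k => (f k : V) with hy
    have hymem : ∀ k : Fin (n + 1), y k ∈ Vsub (k : ℕ) := fun k => (f k).2
    have hvsum : v = ∑ k, y k := by
      have h1 := DirectSum.sum_univ_of f
      calc v = DirectSum.coeLinearMap (fun k : Fin (n + 1) => Vsub k) f := hf.symm
        _ = DirectSum.coeLinearMap (fun k : Fin (n + 1) => Vsub k)
              (∑ k, DirectSum.of (fun k : Fin (n + 1) => ↥(Vsub k)) k (f k)) := by rw [h1]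
        _ = ∑ k, y k := by
              rw [map_sum]
              simp only [DirectSum.coeLinearMap_of, hy]
    -- componentwise eigenvector equation
    have hsum0 : ∑ k, (((d + dstar) * (d + dstar)) (y k) - lam • y k) = 0 := by
      rw [Finset.sum_sub_distrib, ← map_sum, ← Finset.smul_sum, ← hvsum, hveq, sub_self]
    have hcomp : ∀ k : Fin (n + 1), ((d + dstar) * (d + dstar)) (y k) = lam • y k := by
      intro k
      have h := hzero (fun k => ((d + dstar) * (d + dstar)) (y k) - lam • y k)
        (fun k => Submodule.sub_mem _ (hpres k _ (hymem k))
          (Submodule.smul_mem _ _ (hymem k))) hsum0 k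
      exact sub_eq_zero.mp h
    have hex : ∃ k : Fin (n + 1), y k ≠ 0 := by
      by_contra h
      push_neg at h
      exact hv0 (by rw [hvsum]; exact Finset.sum_eq_zero fun k _ => h k)
    obtain ⟨k₀, hk₀⟩ := hex
    by_cases hcase : (k₀ : ℕ) ≤ n - 1
    · exact hgap lam (k₀ : ℕ) hcase ⟨y k₀, hymem k₀, hk₀, hcomp k₀⟩
    · have hkn : (k₀ : ℕ) = n := by have := k₀.isLt; omega
      have hxn : y k₀ ∈ Vsub n := hkn ▸ hymem k₀
      have hdx : d (y k₀) = 0 := hdn _ hxn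
      have hddx : d (dstar (y k₀)) = lam • y k₀ := by
        have h := hcomp k₀
        rwa [hDelta, hdx, map_zero, add_zero] at h
      have hwmem : dstar (y k₀) ∈ Vsub (n - 1) := hstardeg n hn _ hxn
      have hwne : dstar (y k₀) ≠ 0 := by
        intro h
        have h2 : lam • y k₀ = 0 := by rw [← hddx, h, map_zero]
        rcases smul_eq_zero.mp h2 with h' | h'
        · exact hlam h'
        · exact hk₀ h'
      have hΔw : ((d + dstar) * (d + dstar)) (dstar (y k₀)) = lam • dstar (y k₀) := by
        rw [hDelta, hds2 (y k₀), map_zero, zero_add, hddx, map_smul]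
      exact hgap lam (n - 1) le_rfl ⟨dstar (y k₀), hwmem, hwne, hΔw⟩
  refine ⟨hmain, ?_⟩
  -- Part (ii)
  rintro mu ⟨v, hv0, hveq⟩
  have hDsym : (inner ℂ ((d + dstar) v) v : ℂ) = inner ℂ v ((d + dstar) v) := by
    have h1 : (inner ℂ (dstar v) v : ℂ) = inner ℂ v (d v) := by
      rw [← inner_conj_symm, ← hadj, inner_conj_symm]
    simp only [LinearMap.add_apply, inner_add_left, inner_add_right]
    rw [hadj, h1]
    ring
  have hreal : (starRingEnd ℂ) mu = mu := by
    have h1 : (inner ℂ ((d + dstar) v) v : ℂ) = (starRingEnd ℂ) mu * inner ℂ v v := by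
      rw [hveq, inner_smul_left]
    have h2 : (inner ℂ v ((d + dstar) v) : ℂ) = mu * inner ℂ v v := by
      rw [hveq, inner_smul_right]
    have h3 := hDsym
    rw [h1, h2] at h3
    exact mul_right_cancel₀ (inner_self_ne_zero.mpr hv0) h3
  have hmur : mu = ((mu.re : ℝ) : ℂ) := (Complex.conj_eq_iff_re.mp hreal).symm
  refine ⟨mu.re, hmur, ?_⟩
  by_cases h0 : mu = 0
  · left
    rw [h0]
    simp
  · right
    have hΔv : ((d + dstar) * (d + dstar)) v = (mu ^ 2) • v := by
      rw [Module.End.mul_apply, hveq, map_smul, hveq, smul_smul, ← sq]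
    obtain ⟨s, hs1, hs2⟩ := hmain (mu ^ 2) (pow_ne_zero 2 h0) ⟨v, hv0, hΔv⟩
    have hsr : (s : ℂ) = ((mu.re ^ 2 : ℝ) : ℂ) := by
      rw [← hs1]
      conv_lhs => rw [hmur]
      push_cast
      ring
    have hs : s = mu.re ^ 2 := by exact_mod_cast hsr
    rw [← hs]
    exact hs2
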